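/- Under the same two-route setup (Λ_i continuous, non-decreasing, concave, Λ_i(0) = 0; p_i ∈ [p_min, p_max] with 0 < p_min ≤ p_max), let x* maximize rider welfare R(x) = Λ_1(x_1) + Λ_2(x_2) over the unit simplex, with per-driver profits π_1(x_1*) ≥ π_2(x_2*). Let x̃ satisfy x̃_1 ≥ x_1*, x̃_2 ≥ min(α, x_2*), x̃_1 + x̃_2 = 1, and π_1(x̃_1) ≥ π_2(x̃_2). Then R(x*) ≤ (1 + (p_max/p_min)·(1 − α)) · R(x̃). -/

import Mathlib

open Classical

lemma concave_chord_aux (f : ℝ → ℝ) (hf : ConcaveOn ℝ (Set.Ici 0) f) (h0 : f 0 = 0)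
    {t u : ℝ} (ht : 0 < t) (htu : t ≤ u) : t * f u ≤ u * f t := by
  have hu : 0 < u := lt_of_lt_of_le ht htu
  have hdiv : 0 ≤ t / u := by positivity
  have hdiv1 : t / u ≤ 1 := by rw [div_le_one hu]; exact htu
  have h : (t/u) • f u + (1 - t/u) • f 0 ≤ f ((t/u) • u + (1 - t/u) • (0:ℝ)) :=
    hf.2 (Set.mem_Ici.2 hu.le) (Set.mem_Ici.2 (le_refl (0:ℝ))) hdiv (by linarith) (by ring)
  have hc : (t / u) • u + (1 - t / u) • (0:ℝ) = t := by
    rw [smul_eq_mul, smul_eq_mul, mul_zero, add_zero, div_mul_cancel₀ t hu.ne']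
  rw [hc, smul_eq_mul, smul_eq_mul, h0, mul_zero, add_zero, div_mul_eq_mul_div,
    div_le_iff₀ hu] at h
  linarith [h]

lemma tangent_aux (f : ℝ → ℝ) (hf : ConcaveOn ℝ (Set.Ici 0) f) (h0 : f 0 = 0)
    {d x : ℝ} (hd : HasDerivWithinAt f d (Set.Ici 0) 0) (hx : 0 < x) :
    f x ≤ d * x := by
  have ht := hasDerivWithinAt_iff_tendsto_slope.1 hd
  rw [show Set.Ici (0:ℝ) \ {0} = Set.Ioi 0 from Set.Ici_sdiff_left] at ht
  have hev : ∀ᶠ t in nhdsWithin (0:ℝ) (Set.Ioi 0), f x / x ≤ slope f 0 t := by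
    filter_upwards [Ioo_mem_nhdsGT_of_mem (Set.left_mem_Ico.2 hx)] with t htm
    have htpos : 0 < t := htm.1
    have hchord := concave_chord_aux f hf h0 htpos htm.2.le
    have hsl : slope f 0 t = f t / t := by
      rw [slope_def_field, h0]; ring
    rw [hsl, div_le_div_iff₀ hx htpos]
    nlinarith [hchord]
  have := ge_of_tendsto ht hev
  rw [div_le_iff₀ hx] at this
  linarith

set_option maxHeartbeats 1000000 in
/-- Rider-welfare ratio bound for the LPF-R Stackelberg strategy with two
routes: `R(x*) ≤ (1 + (pmax/pmin) (1 − α)) R(x̃)`. -/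
theorem lpf_rider_welfare_ratio_two_routes
    (Λ1 Λ2 : ℝ → ℝ) (p1 p2 d1 d2 α pmin pmax : ℝ)
    (hpmin : 0 < pmin) (hpminmax : pmin ≤ pmax)
    (hp1l : pmin ≤ p1) (hp1u : p1 ≤ pmax)
    (hp2l : pmin ≤ p2) (hp2u : p2 ≤ pmax)
    (hcont1 : ContinuousOn Λ1 (Set.Ici 0)) (hcont2 : ContinuousOn Λ2 (Set.Ici 0))
    (hmono1 : MonotoneOn Λ1 (Set.Ici 0)) (hmono2 : MonotoneOn Λ2 (Set.Ici 0))
    (hconc1 : ConcaveOn ℝ (Set.Ici 0) Λ1) (hconc2 : ConcaveOn ℝ (Set.Ici 0) Λ2)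
    (h01 : Λ1 0 = 0) (h02 : Λ2 0 = 0)
    (hnn1 : ∀ x, 0 ≤ x → 0 ≤ Λ1 x) (hnn2 : ∀ x, 0 ≤ x → 0 ≤ Λ2 x)
    (hd1 : HasDerivWithinAt Λ1 d1 (Set.Ici 0) 0)
    (hd2 : HasDerivWithinAt Λ2 d2 (Set.Ici 0) 0)
    (π1 π2 : ℝ → ℝ)
    (hπ1 : ∀ x, π1 x = if 0 < x then p1 * Λ1 x / x else p1 * d1)
    (hπ2 : ∀ x, π2 x = if 0 < x then p2 * Λ2 x / x else p2 * d2)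
    (hα : α ∈ Set.Icc (0 : ℝ) 1)
    (x1s x2s : ℝ) (hx1s : 0 ≤ x1s) (hx2s : 0 ≤ x2s) (hsums : x1s + x2s = 1)
    -- x* maximizes rider welfare over the unit simplex
    (hopt : ∀ y1 y2 : ℝ, 0 ≤ y1 → 0 ≤ y2 → y1 + y2 = 1 →
      Λ1 y1 + Λ2 y2 ≤ Λ1 x1s + Λ2 x2s)
    (hord : π2 x2s ≤ π1 x1s)
    (xt1 xt2 : ℝ) (hxt1 : 0 ≤ xt1) (hxt2 : 0 ≤ xt2)
    (hsumt : xt1 + xt2 = 1)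
    (hxt2lb : min α x2s ≤ xt2)
    (hxt1lb : x1s ≤ xt1)
    (hordt : π2 xt2 ≤ π1 xt1) :
    Λ1 x1s + Λ2 x2s ≤ (1 + pmax / pmin * (1 - α)) * (Λ1 xt1 + Λ2 xt2) := by

  have h1α : (0:ℝ) ≤ 1 - α := by linarith [hα.2]
  have hRt : 0 ≤ Λ1 xt1 + Λ2 xt2 := add_nonneg (hnn1 _ hxt1) (hnn2 _ hxt2)
  have hm1 : Λ1 x1s ≤ Λ1 xt1 := hmono1 hx1s hxt1 hxt1lb
  have key : pmin * (Λ1 x1s + Λ2 x2s) ≤ (pmin + pmax * (1 - α)) * (Λ1 xt1 + Λ2 xt2) := by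
    rcases le_or_gt x2s xt2 with hcase | hcase
    · have hm2 : Λ2 x2s ≤ Λ2 xt2 := hmono2 hx2s hxt2 hcase
      linarith only [mul_nonneg (mul_nonneg (le_trans hpmin.le hpminmax) h1α) hRt,
        mul_le_mul_of_nonneg_left (add_le_add hm1 hm2) hpmin.le]
    · -- xt2 < x2s
      have hx2spos : 0 < x2s := lt_of_le_of_lt hxt2 hcase
      have hx2s1 : x2s ≤ 1 := by linarith
      have hxt1pos : 0 < xt1 := by linarith
      rcases eq_or_lt_of_le hxt2 with h0 | h0
      · -- xt2 = 0, hence α = 0 and xt1 = 1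
        have hα0 : α = 0 := by
          by_contra hne
          have hαpos : 0 < α := lt_of_le_of_ne hα.1 (Ne.symm hne)
          have := lt_min hαpos hx2spos
          rw [← h0] at hxt2lb
          linarith
        have hxt11 : xt1 = 1 := by linarith [h0]
        have htan : Λ2 x2s ≤ d2 * x2s := tangent_aux Λ2 hconc2 h02 hd2 hx2spos
        have hd2nn : 0 ≤ d2 := by
          have hh : 0 ≤ d2 * x2s := le_trans (hnn2 _ hx2s) htan
          by_contra hneg
          push_neg at hneg
          nlinarith [mul_pos (neg_pos.2 hneg) hx2spos]
        have hπ2' : π2 xt2 = p2 * d2 := by rw [hπ2, ← h0]; simp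
        have hπ1' : π1 xt1 = p1 * Λ1 1 := by
          rw [hπ1, hxt11, if_pos one_pos, div_one]
        have hord' : p2 * d2 ≤ p1 * Λ1 1 := by
          rw [hπ2', hπ1'] at hordt; exact hordt
        have hΛ11 : 0 ≤ Λ1 1 := hnn1 1 zero_le_one
        have f1 : pmin * Λ1 x1s ≤ pmin * Λ1 1 := by
          rw [hxt11] at hm1; exact mul_le_mul_of_nonneg_left hm1 hpmin.le
        have f2 : pmin * Λ2 x2s ≤ pmin * d2 := by
          have h' : Λ2 x2s ≤ d2 := le_trans htan (mul_le_of_le_one_right hd2nn hx2s1)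
          exact mul_le_mul_of_nonneg_left h' hpmin.le
        have f3 : pmin * d2 ≤ pmax * Λ1 1 := by
          linarith only [mul_le_mul_of_nonneg_right hp2l hd2nn, hord',
            mul_le_mul_of_nonneg_right hp1u hΛ11]
        rw [hα0, hxt11, ← h0, h02]
        linarith only [f1, f2, f3]
      · -- 0 < xt2 < x2s
        have hαle : α ≤ xt2 := by
          rcases le_total α x2s with hc | hc
          · rw [min_eq_left hc] at hxt2lb; exact hxt2lb
          · rw [min_eq_right hc] at hxt2lb; linarith
        have hchord : xt2 * Λ2 x2s ≤ x2s * Λ2 xt2 :=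
          concave_chord_aux Λ2 hconc2 h02 h0 hcase.le
        set s := Λ2 xt2 / xt2 with hs_def
        set u := Λ1 xt1 / xt1 with hu_def
        have hs_nn : 0 ≤ s := div_nonneg (hnn2 _ hxt2) hxt2
        have hu_nn : 0 ≤ u := div_nonneg (hnn1 _ hxt1) hxt1
        have hsx : s * xt2 = Λ2 xt2 := div_mul_cancel₀ _ h0.ne'
        have hux : u * xt1 = Λ1 xt1 := div_mul_cancel₀ _ hxt1pos.ne'
        have hπ2' : π2 xt2 = p2 * s := by
          rw [hπ2, if_pos h0, mul_div_assoc]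
        have hπ1' : π1 xt1 = p1 * u := by
          rw [hπ1, if_pos hxt1pos, mul_div_assoc]
        have hord' : p2 * s ≤ p1 * u := by rw [hπ2', hπ1'] at hordt; exact hordt
        have hsu : pmin * s ≤ pmax * u := by
          linarith only [mul_le_mul_of_nonneg_right hp2l hs_nn, hord',
            mul_le_mul_of_nonneg_right hp1u hu_nn]
        have hch2 : Λ2 x2s ≤ x2s * s := by
          rw [← hsx] at hchord
          have h' : Λ2 x2s * xt2 ≤ (x2s * s) * xt2 := by linarith only [hchord]
          exact le_of_mul_le_mul_right h' h0
        have hP : 0 ≤ pmin * s := mul_nonneg hpmin.le hs_nn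
        have hc1 : x2s - xt2 ≤ xt1 := by linarith
        have hc2 : x2s - xt2 ≤ 1 - α := by linarith
        have T1 : (1-α) * ((x2s - xt2) * (pmin*s)) ≤ (1-α) * (xt1 * (pmin*s)) :=
          mul_le_mul_of_nonneg_left (mul_le_mul_of_nonneg_right hc1 hP) h1α
        have T2 : (1-α) * (xt1 * (pmin * s)) ≤ (1-α) * (xt1 * (pmax * u)) :=
          mul_le_mul_of_nonneg_left
            (mul_le_mul_of_nonneg_left hsu hxt1pos.le) h1α
        have T3 : α * ((x2s - xt2) * (pmin*s)) ≤ α * ((1-α) * (pmin*s)) :=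
          mul_le_mul_of_nonneg_left (mul_le_mul_of_nonneg_right hc2 hP) hα.1
        have T4 : α * (pmin * s) ≤ xt2 * (pmax * s) :=
          le_trans (mul_le_mul_of_nonneg_right hαle hP)
            (mul_le_mul_of_nonneg_left
              (mul_le_mul_of_nonneg_right hpminmax hs_nn) hxt2)
        have T5 : (1-α) * (α * (pmin*s)) ≤ (1-α) * (xt2 * (pmax*s)) :=
          mul_le_mul_of_nonneg_left T4 h1α
        have e1 : (1-α) * (xt1 * (pmax * u)) = (1-α) * (pmax * Λ1 xt1) := by
          rw [← hux]; ring
        have e2 : (1-α) * (xt2 * (pmax * s)) = (1-α) * (pmax * Λ2 xt2) := by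
          rw [← hsx]; ring
        have e4 : pmin * Λ2 xt2 = xt2 * (pmin * s) := by rw [← hsx]; ring
        have hch3 : pmin * Λ2 x2s ≤ pmin * (x2s * s) :=
          mul_le_mul_of_nonneg_left hch2 hpmin.le
        have f1 : pmin * Λ1 x1s ≤ pmin * Λ1 xt1 :=
          mul_le_mul_of_nonneg_left hm1 hpmin.le
        linarith only [T1, T2, T3, T5, e1, e2, e4, hch3, f1]
  have hEq : (1 + pmax / pmin * (1 - α)) * (Λ1 xt1 + Λ2 xt2)
      = (pmin + pmax * (1 - α)) * (Λ1 xt1 + Λ2 xt2) / pmin := by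
    field_simp
  rw [hEq, le_div_iff₀ hpmin]
  linarith only [key]
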